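/- Let n ≥ 1, let A be a real symmetric n×n matrix, B a real symmetric positive definite n×n matrix, and ρ̃ > 0. Define Ω = {x ∈ ℝⁿ : xᵀBx ≤ 1}, Q(x) = xᵀAx − ρ̃‖x‖₀, and for ε > 0, Q_ε(x) = xᵀAx − (ρ̃ / log(1 + 1/ε)) Σᵢ log(1 + |xᵢ|/ε). Then for every ε ∈ (0, 1), sup_{x ∈ Ω} |Q_ε(x) − Q(x)| ≥ ρ̃; in particular, Q_ε does not converge uniformly to Q on Ω as ε → 0⁺, even though Q_ε(x) → Q(x) pointwise for every fixed x. -/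

import Mathlib

open Matrix Filter

lemma ratio_tendsto (a : ℝ) (ha : 0 < a) :
    Tendsto (fun ε : ℝ => Real.log (1 + a/ε) / Real.log (1 + 1/ε))
      (nhdsWithin 0 (Set.Ioi 0)) (nhds 1) := by
  have h1 : Tendsto (fun ε : ℝ => Real.log (ε + 1)) (nhdsWithin 0 (Set.Ioi 0)) (nhds 0) := by
    have hc : Tendsto (fun ε : ℝ => ε + 1) (nhdsWithin 0 (Set.Ioi 0)) (nhds 1) := by
      have : Tendsto (fun ε : ℝ => ε + 1) (nhds 0) (nhds (0 + 1)) :=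
        (continuous_id.add (continuous_const (y := (1:ℝ)))).tendsto 0
      simpa using this.mono_left nhdsWithin_le_nhds
    simpa [Function.comp_def] using ((Real.continuousAt_log (by norm_num : (1:ℝ) ≠ 0)).tendsto.comp hc)
  have hden : Tendsto (fun ε : ℝ => Real.log (ε + 1) - Real.log ε)
      (nhdsWithin 0 (Set.Ioi 0)) atTop := by
    have h2 : Tendsto (fun ε : ℝ => -Real.log ε) (nhdsWithin 0 (Set.Ioi 0)) atTop :=
      tendsto_neg_atTop_iff.mpr Real.tendsto_log_nhdsGT_zero
    simpa [sub_eq_add_neg] using tendsto_atTop_add_left_of_le' _ (-1)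
      (h1.eventually (eventually_ge_nhds (by norm_num : (-1:ℝ) < 0))) h2
  have hnum : Tendsto (fun ε : ℝ => Real.log (ε + a) - Real.log (ε + 1))
      (nhdsWithin 0 (Set.Ioi 0)) (nhds (Real.log a)) := by
    have hca : Tendsto (fun ε : ℝ => ε + a) (nhdsWithin 0 (Set.Ioi 0)) (nhds a) := by
      have : Tendsto (fun ε : ℝ => ε + a) (nhds 0) (nhds (0 + a)) :=
        (continuous_id.add continuous_const).tendsto 0
      simpa using this.mono_left nhdsWithin_le_nhds
    have hla : Tendsto (fun ε : ℝ => Real.log (ε + a)) (nhdsWithin 0 (Set.Ioi 0))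
        (nhds (Real.log a)) := (Real.continuousAt_log (ne_of_gt ha)).tendsto.comp hca
    simpa using hla.sub h1
  have hq : Tendsto (fun ε : ℝ => 1 + (Real.log (ε + a) - Real.log (ε + 1)) /
      (Real.log (ε + 1) - Real.log ε)) (nhdsWithin 0 (Set.Ioi 0)) (nhds 1) := by
    have := hnum.div_atTop hden
    simpa using (tendsto_const_nhds (x := (1:ℝ))).add this
  refine hq.congr' ?_
  filter_upwards [self_mem_nhdsWithin] with ε (hε : ε ∈ Set.Ioi 0)
  have hε0 : (0:ℝ) < ε := hε
  have hB : Real.log (ε + 1) - Real.log ε > 0 := by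
    have : Real.log ε < Real.log (ε + 1) := Real.log_lt_log hε0 (by linarith)
    linarith
  have e1 : Real.log (1 + a/ε) = Real.log (ε + a) - Real.log ε := by
    rw [show (1 : ℝ) + a/ε = (ε + a)/ε by field_simp, Real.log_div (by positivity) (ne_of_gt hε0)]
  have e2 : Real.log (1 + 1/ε) = Real.log (ε + 1) - Real.log ε := by
    rw [show (1 : ℝ) + 1/ε = (ε + 1)/ε by field_simp, Real.log_div (by positivity) (ne_of_gt hε0)]
  rw [e1, e2]
  field_simp
  ring

lemma pointwise (n : ℕ) (ρ : ℝ) (cA : ℝ) (x : Fin n → ℝ) :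
    Filter.Tendsto
        (fun ε : ℝ =>
          cA - (ρ / Real.log (1 + 1 / ε)) * ∑ i, Real.log (1 + |x i| / ε))
        (nhdsWithin 0 (Set.Ioi 0))
        (nhds (cA - ρ * ((Finset.univ.filter (fun i => x i ≠ 0)).card : ℝ))) := by
  have hsum : Tendsto (fun ε : ℝ => ∑ i, Real.log (1 + |x i| / ε) / Real.log (1 + 1/ε))
      (nhdsWithin 0 (Set.Ioi 0))
      (nhds (∑ i : Fin n, if x i ≠ 0 then (1:ℝ) else 0)) := by
    refine tendsto_finset_sum _ (fun i _ => ?_)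
    by_cases h : x i = 0
    · simp [h]
    · simpa [h] using ratio_tendsto |x i| (abs_pos.mpr h)
  have hcard : (∑ i : Fin n, if x i ≠ 0 then (1:ℝ) else 0)
      = ((Finset.univ.filter (fun i => x i ≠ 0)).card : ℝ) := by
    rw [Finset.card_filter]
    push_cast
    simp
  rw [hcard] at hsum
  have := (tendsto_const_nhds (x := cA)).sub ((tendsto_const_nhds (x := ρ)).mul hsum)
  refine this.congr' ?_
  filter_upwards [self_mem_nhdsWithin] with ε (hε : ε ∈ Set.Ioi 0)
  have hε0 : (0:ℝ) < ε := hε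
  have hL : 0 < Real.log (1 + 1/ε) := Real.log_pos (by nlinarith [one_div_pos.mpr hε0])
  rw [← Finset.sum_div]
  field_simp

lemma omega_bdd (n : ℕ) (hn : 1 ≤ n) (B : Matrix (Fin n) (Fin n) ℝ)
    (hBpd : ∀ x : Fin n → ℝ, x ≠ 0 → 0 < x ⬝ᵥ B *ᵥ x) :
    ∃ C : ℝ, 0 < C ∧ ∀ x : Fin n → ℝ, x ⬝ᵥ B *ᵥ x ≤ 1 → ‖x‖ ≤ C := by
  haveI : Nonempty (Fin n) := ⟨⟨0, hn⟩⟩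
  have hg : Continuous (fun x : Fin n → ℝ => x ⬝ᵥ B *ᵥ x) :=
    continuous_id.dotProduct (continuous_const.matrix_mulVec continuous_id)
  have hcs : IsCompact (Metric.sphere (0 : Fin n → ℝ) 1) := isCompact_sphere _ _
  have hne : (Metric.sphere (0 : Fin n → ℝ) 1).Nonempty :=
    NormedSpace.sphere_nonempty.mpr (by norm_num)
  obtain ⟨x₀, hx₀s, hx₀min⟩ := hcs.exists_isMinOn hne hg.continuousOn
  have hx₀n : ‖x₀‖ = 1 := by simpa using hx₀s
  have hx₀ne : x₀ ≠ 0 := by intro h; rw [h] at hx₀n; simp at hx₀n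
  set m := x₀ ⬝ᵥ B *ᵥ x₀ with hm
  have hm0 : 0 < m := hBpd x₀ hx₀ne
  refine ⟨Real.sqrt (1/m), Real.sqrt_pos.mpr (by positivity), fun x hx => ?_⟩
  by_cases hx0 : x = 0
  · simp only [hx0, norm_zero]; positivity
  · have hnx : 0 < ‖x‖ := norm_pos_iff.mpr hx0
    set y : Fin n → ℝ := ‖x‖⁻¹ • x with hy
    have hyn : ‖y‖ = 1 := by
      rw [hy, norm_smul]; simp [abs_of_pos (inv_pos.mpr hnx), inv_mul_cancel₀ (ne_of_gt hnx)]
    have hys : y ∈ Metric.sphere (0 : Fin n → ℝ) 1 := by simpa using hyn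
    have hgy : y ⬝ᵥ B *ᵥ y = ‖x‖⁻¹ ^ 2 * (x ⬝ᵥ B *ᵥ x) := by
      rw [hy, smul_dotProduct, Matrix.mulVec_smul, dotProduct_smul,
        smul_eq_mul, smul_eq_mul]
      try ring
    have hmy : m ≤ y ⬝ᵥ B *ᵥ y := hx₀min hys
    have key : m * ‖x‖ ^ 2 ≤ 1 := by
      rw [hgy] at hmy
      have : m * ‖x‖^2 ≤ x ⬝ᵥ B *ᵥ x := by
        have h2 := mul_le_mul_of_nonneg_right hmy (le_of_lt (pow_pos hnx 2))
        calc m * ‖x‖^2 ≤ ‖x‖⁻¹^2 * (x ⬝ᵥ B *ᵥ x) * ‖x‖^2 := h2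
          _ = x ⬝ᵥ B *ᵥ x := by field_simp
      linarith
    have : ‖x‖ ^ 2 ≤ 1/m := by
      rw [le_div_iff₀ hm0]; linarith [key]
    calc ‖x‖ = Real.sqrt (‖x‖^2) := by rw [Real.sqrt_sq (norm_nonneg x)]
      _ ≤ Real.sqrt (1/m) := Real.sqrt_le_sqrt this

lemma part1 (n : ℕ) (hn : 1 ≤ n) (A B : Matrix (Fin n) (Fin n) ℝ)
    (hBpd : ∀ x : Fin n → ℝ, x ≠ 0 → 0 < x ⬝ᵥ B *ᵥ x)
    (ρ : ℝ) (hρ : 0 < ρ) (ε : ℝ) (hε : ε ∈ Set.Ioo (0:ℝ) 1) :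
    ρ ≤ sSup {v : ℝ | ∃ x : Fin n → ℝ, x ⬝ᵥ B *ᵥ x ≤ 1 ∧
        v = |(x ⬝ᵥ A *ᵥ x - (ρ / Real.log (1 + 1 / ε)) * ∑ i, Real.log (1 + |x i| / ε))
             - (x ⬝ᵥ A *ᵥ x - ρ * ((Finset.univ.filter (fun i => x i ≠ 0)).card : ℝ))|} := by
  obtain ⟨hε0, hε1⟩ := hε
  set L := Real.log (1 + 1/ε) with hLdef
  have hL : 0 < L := Real.log_pos (by nlinarith [one_div_pos.mpr hε0])
  set S := {v : ℝ | ∃ x : Fin n → ℝ, x ⬝ᵥ B *ᵥ x ≤ 1 ∧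
        v = |(x ⬝ᵥ A *ᵥ x - (ρ / L) * ∑ i, Real.log (1 + |x i| / ε))
             - (x ⬝ᵥ A *ᵥ x - ρ * ((Finset.univ.filter (fun i => x i ≠ 0)).card : ℝ))|} with hS
  -- nonempty
  have hSne : S.Nonempty := by
    refine ⟨_, 0, ?_, rfl⟩
    simpa using zero_le_one (α := ℝ)
  -- bounded above
  obtain ⟨C, hC0, hC⟩ := omega_bdd n hn B hBpd
  have hSbdd : BddAbove S := by
    refine ⟨ρ * n + ρ / L * (n * Real.log (1 + C/ε)), ?_⟩
    rintro v ⟨x, hx, rfl⟩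
    have hxC : ∀ i, |x i| ≤ C := fun i => by
      have := norm_le_pi_norm x i
      simpa using this.trans (hC x hx)
    have hdivnn : ∀ i : Fin n, 0 ≤ |x i| / ε := fun i => div_nonneg (abs_nonneg _) hε0.le
    have hT0 : 0 ≤ ∑ i, Real.log (1 + |x i| / ε) :=
      Finset.sum_nonneg fun i _ => Real.log_nonneg (by linarith [hdivnn i])
    have hTC : ∑ i, Real.log (1 + |x i| / ε) ≤ n * Real.log (1 + C/ε) := by
      have hterm : ∀ i ∈ Finset.univ, Real.log (1 + |x i| / ε) ≤ Real.log (1 + C/ε) := by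
        intro i _
        refine Real.log_le_log (by linarith [hdivnn i]) ?_
        have h := hxC i
        have h2 : |x i| / ε ≤ C / ε := by gcongr
        linarith
      calc ∑ i, Real.log (1 + |x i| / ε) ≤ ∑ _i : Fin n, Real.log (1 + C/ε) :=
            Finset.sum_le_sum hterm
        _ = n * Real.log (1 + C/ε) := by rw [Finset.sum_const]; simp [nsmul_eq_mul]
    have hk : ((Finset.univ.filter (fun i => x i ≠ 0)).card : ℝ) ≤ n := by
      have h := Finset.card_filter_le Finset.univ (fun i => x i ≠ 0)
      rw [Finset.card_univ, Fintype.card_fin] at h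
      exact_mod_cast h
    have hk0 : (0:ℝ) ≤ ((Finset.univ.filter (fun i => x i ≠ 0)).card : ℝ) := Nat.cast_nonneg _
    have heq : (x ⬝ᵥ A *ᵥ x - (ρ / L) * ∑ i, Real.log (1 + |x i| / ε))
             - (x ⬝ᵥ A *ᵥ x - ρ * ((Finset.univ.filter (fun i => x i ≠ 0)).card : ℝ))
        = ρ * ((Finset.univ.filter (fun i => x i ≠ 0)).card : ℝ)
          - (ρ / L) * ∑ i, Real.log (1 + |x i| / ε) := by ring
    rw [heq]
    have h1 : 0 ≤ ρ / L := by positivity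
    have habs : |ρ * ((Finset.univ.filter (fun i => x i ≠ 0)).card : ℝ)
          - (ρ/L) * ∑ i, Real.log (1 + |x i| / ε)|
        ≤ ρ * ((Finset.univ.filter (fun i => x i ≠ 0)).card : ℝ)
          + (ρ/L) * ∑ i, Real.log (1 + |x i| / ε) := by
      rw [abs_sub_le_iff]
      constructor <;> nlinarith [mul_nonneg h1 hT0, mul_nonneg hρ.le hk0]
    refine habs.trans ?_
    exact add_le_add (mul_le_mul_of_nonneg_left hk hρ.le) (mul_le_mul_of_nonneg_left hTC h1)
  rw [le_csSup_iff hSbdd hSne]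
  intro b hb
  refine le_of_forall_pos_le_add fun δ hδ => ?_
  -- construct witness
  set i₀ : Fin n := ⟨0, hn⟩
  have hsne : (Pi.single i₀ (1:ℝ)) ≠ (0 : Fin n → ℝ) := by
    intro h
    have h2 := congrFun h i₀
    simp at h2
  have hBpd1 := hBpd _ hsne
  have hc₀val : (Pi.single i₀ (1:ℝ)) ⬝ᵥ B *ᵥ (Pi.single i₀ (1:ℝ)) = B i₀ i₀ := by
    simp [Matrix.mulVec, single_dotProduct, dotProduct_single]
  have hc₀ : 0 < B i₀ i₀ := hc₀val ▸ hBpd1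
  set t : ℝ := min (ε * (Real.exp (L * δ / ρ) - 1)) (Real.sqrt (B i₀ i₀))⁻¹ with htdef
  have hexp1 : 1 < Real.exp (L * δ / ρ) := by
    rw [show (1:ℝ) = Real.exp 0 by simp]
    exact Real.exp_lt_exp.mpr (by positivity)
  have ht0 : 0 < t := lt_min (by nlinarith) (by positivity)
  set x : Fin n → ℝ := Pi.single i₀ t with hx
  have hΩ : x ⬝ᵥ B *ᵥ x ≤ 1 := by
    have hval : x ⬝ᵥ B *ᵥ x = t * (B i₀ i₀ * t) := by
      simp [hx, Matrix.mulVec, single_dotProduct, dotProduct_single, mul_comm]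
    rw [hval]
    have ht2 : t ≤ (Real.sqrt (B i₀ i₀))⁻¹ := min_le_right _ _
    have h3 : t * t ≤ (Real.sqrt (B i₀ i₀))⁻¹ * (Real.sqrt (B i₀ i₀))⁻¹ :=
      mul_le_mul ht2 ht2 ht0.le (by positivity)
    have h4 : (Real.sqrt (B i₀ i₀))⁻¹ * (Real.sqrt (B i₀ i₀))⁻¹ = (B i₀ i₀)⁻¹ := by
      rw [← mul_inv, Real.mul_self_sqrt hc₀.le]
    calc t * (B i₀ i₀ * t) = B i₀ i₀ * (t * t) := by ring
      _ ≤ B i₀ i₀ * (B i₀ i₀)⁻¹ := by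
          rw [← h4]; exact mul_le_mul_of_nonneg_left h3 hc₀.le
      _ = 1 := mul_inv_cancel₀ hc₀.ne'
  have hcard : (Finset.univ.filter (fun i => x i ≠ 0)) = {i₀} := by
    ext i
    simp only [Finset.mem_filter, Finset.mem_univ, true_and, Finset.mem_singleton, hx,
      Pi.single_apply]
    constructor
    · intro h; by_contra hne; simp [hne] at h
    · intro h; simp [h, ht0.ne']
  have hsum : ∑ i, Real.log (1 + |x i| / ε) = Real.log (1 + t/ε) := by
    rw [Finset.sum_eq_single i₀]
    · simp [hx, abs_of_pos ht0]
    · intro i _ hne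
      simp [hx, Pi.single_eq_of_ne hne]
    · simp
  have hmem : |(x ⬝ᵥ A *ᵥ x - (ρ / L) * Real.log (1 + t/ε))
             - (x ⬝ᵥ A *ᵥ x - ρ * 1)| ∈ S := by
    refine ⟨x, hΩ, ?_⟩
    rw [hsum, hcard]
    norm_num
  have hvb := hb hmem
  have htε : 0 ≤ t / ε := div_nonneg ht0.le hε0.le
  have hlog : Real.log (1 + t/ε) ≤ L * δ / ρ := by
    rw [Real.log_le_iff_le_exp (by linarith)]
    have ht1 : t ≤ ε * (Real.exp (L * δ / ρ) - 1) := min_le_left _ _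
    have : t / ε ≤ Real.exp (L * δ / ρ) - 1 := by
      rw [div_le_iff₀ hε0]; linarith [ht1]
    linarith
  have hlog0 : 0 ≤ Real.log (1 + t/ε) := Real.log_nonneg (by linarith)
  have hineq : ρ - δ ≤ |(x ⬝ᵥ A *ᵥ x - (ρ / L) * Real.log (1 + t/ε))
             - (x ⬝ᵥ A *ᵥ x - ρ * 1)| := by
    have heq2 : (x ⬝ᵥ A *ᵥ x - (ρ / L) * Real.log (1 + t/ε))
             - (x ⬝ᵥ A *ᵥ x - ρ * 1) = ρ - (ρ/L) * Real.log (1 + t/ε) := by ring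
    rw [heq2]
    have h5 : (ρ/L) * Real.log (1 + t/ε) ≤ δ := by
      calc (ρ/L) * Real.log (1 + t/ε) ≤ (ρ/L) * (L * δ / ρ) :=
            mul_le_mul_of_nonneg_left hlog (by positivity)
        _ = δ := by field_simp
    calc ρ - δ ≤ ρ - (ρ/L) * Real.log (1 + t/ε) := by linarith
      _ ≤ |ρ - (ρ/L) * Real.log (1 + t/ε)| := le_abs_self _
  linarith [hineq.trans hvb]

/-- Q_ε does not converge uniformly to Q on Ω = {x : xᵀBx ≤ 1}: for every ε ∈ (0,1),
    sup_{x ∈ Ω} |Q_ε(x) − Q(x)| ≥ ρ̃, even though Q_ε → Q pointwise as ε → 0⁺. -/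
theorem stmt_8 (n : ℕ) (hn : 1 ≤ n) (A B : Matrix (Fin n) (Fin n) ℝ)
    (hA : A.IsSymm) (hB : B.IsSymm)
    (hBpd : ∀ x : Fin n → ℝ, x ≠ 0 → 0 < x ⬝ᵥ B *ᵥ x)
    (ρ : ℝ) (hρ : 0 < ρ) :
    (∀ ε : ℝ, ε ∈ Set.Ioo (0 : ℝ) 1 →
      ρ ≤ sSup {v : ℝ | ∃ x : Fin n → ℝ, x ⬝ᵥ B *ᵥ x ≤ 1 ∧
        v = |(x ⬝ᵥ A *ᵥ x - (ρ / Real.log (1 + 1 / ε)) * ∑ i, Real.log (1 + |x i| / ε))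
             - (x ⬝ᵥ A *ᵥ x - ρ * ((Finset.univ.filter (fun i => x i ≠ 0)).card : ℝ))|}) ∧
    (∀ x : Fin n → ℝ, Filter.Tendsto
        (fun ε : ℝ =>
          x ⬝ᵥ A *ᵥ x - (ρ / Real.log (1 + 1 / ε)) * ∑ i, Real.log (1 + |x i| / ε))
        (nhdsWithin 0 (Set.Ioi 0))
        (nhds (x ⬝ᵥ A *ᵥ x - ρ * ((Finset.univ.filter (fun i => x i ≠ 0)).card : ℝ)))) := by
  exact ⟨fun ε hε => part1 n hn A B hBpd ρ hρ ε hε, fun x => pointwise n ρ (x ⬝ᵥ A *ᵥ x) x⟩
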